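/- If the graph 𝒢 = (A,E) is disconnected, then the quotient space J_A^𝒢 = A^ℕ/∼_𝒢 is a disconnected topological space. -/

import Mathlib

/-- The relation `∼_𝒢` on `A^ℕ` associated with the adjacency relation `Adj` of a
graph on `A`. -/
def GRel {A : Type*} (Adj : A → A → Prop) (x y : ℕ → A) : Prop :=
  x = y ∨ ∃ (n : ℕ) (a b : A), Adj a b ∧ (∀ m < n, x m = y m) ∧
    x n = a ∧ y n = b ∧ ∀ m, n < m → x m = b ∧ y m = a

/-- If the graph `𝒢 = (A,E)` is disconnected (there is a partition `A = S ∪ T`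
into nonempty sets with no edge between `S` and `T`), then the graph Lipscomb
space `J_A^𝒢 = A^ℕ/∼_𝒢` (quotient of the product of discrete spaces) is a
disconnected topological space. -/
theorem stmt15 {A : Type*} (hA : ∃ a b : A, a ≠ b) (Adj : A → A → Prop)
    (hrefl : ∀ a, Adj a a) (hsymm : ∀ a b, Adj a b → Adj b a)
    (hdis : ∃ S T : Set A, S.Nonempty ∧ T.Nonempty ∧ S ∪ T = Set.univ ∧
      S ∩ T = ∅ ∧ ∀ s ∈ S, ∀ t ∈ T, ¬Adj s t)
    (Sd : Setoid (ℕ → A)) (hSd : ∀ x y, Sd.r x y ↔ GRel Adj x y) :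
    ¬@ConnectedSpace (Quotient Sd)
      (@instTopologicalSpaceQuotient _ Sd
        (@Pi.topologicalSpace ℕ (fun _ => A) (fun _ => ⊥))) := by
  obtain ⟨S, T, ⟨s0, hs0⟩, ⟨t0, ht0⟩, hunion, hinter, hedge⟩ := hdis
  letI : TopologicalSpace A := ⊥
  haveI : DiscreteTopology A := ⟨rfl⟩
  letI : TopologicalSpace (ℕ → A) := Pi.topologicalSpace
  letI : TopologicalSpace (Quotient Sd) := instTopologicalSpaceQuotient
  intro hconn
  have hT : ∀ a : A, a ∉ S → a ∈ T := by
    intro a ha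
    have : a ∈ S ∪ T := hunion ▸ Set.mem_univ a
    rcases this with h | h
    · exact absurd h ha
    · exact h
  have key : ∀ x y : ℕ → A, GRel Adj x y → (x 0 ∈ S ↔ y 0 ∈ S) := by
    intro x y h
    rcases h with rfl | ⟨n, a, b, hab, hlt, hxn, hyn, _⟩
    · rfl
    · cases n with
      | zero =>
        rw [hxn, hyn]
        constructor
        · intro ha
          by_contra hb
          exact hedge a ha b (hT b hb) hab
        · intro hb
          by_contra ha
          exact hedge b hb a (hT a ha) (hsymm a b hab)
      | succ k => rw [hlt 0 (Nat.succ_pos k)]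
  set V : Set (Quotient Sd) :=
    {q | Quotient.liftOn q (fun x => x 0 ∈ S)
      (fun x y h => propext (key x y ((hSd x y).mp h)))} with hV
  have hpre : Quotient.mk Sd ⁻¹' V = {x : ℕ → A | x 0 ∈ S} := rfl
  have hopen : IsOpen V := by
    rw [isOpen_coinduced (f := Quotient.mk Sd)]
    exact (continuous_apply (A := fun _ : ℕ => A) 0).isOpen_preimage S (isOpen_discrete S)
  have hclosed : IsClosed V := by
    rw [← isOpen_compl_iff, isOpen_coinduced (f := Quotient.mk Sd)]
    have : Quotient.mk Sd ⁻¹' Vᶜ = {x : ℕ → A | x 0 ∉ S} := rfl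
    rw [this]
    exact (continuous_apply (A := fun _ : ℕ => A) 0).isOpen_preimage Sᶜ (isOpen_discrete _)
  have hclopen : IsClopen V := ⟨hclosed, hopen⟩
  rcases isClopen_iff.mp hclopen with h | h
  · have : (Quotient.mk Sd fun _ => s0) ∈ V := hs0
    rw [h] at this
    exact this
  · have : (Quotient.mk Sd fun _ => t0) ∈ V := h ▸ Set.mem_univ _
    have ht0S : t0 ∈ S := this
    have : t0 ∈ S ∩ T := ⟨ht0S, ht0⟩
    rw [hinter] at this
    exact this
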